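/- Let W_n (n ≥ 6) be the wheel graph with outer cycle v_1,…,v_{n−1} and universal vertex v_n. A set A ⊆ V is a center set of W_n if and only if A is one of: {v_i} for 1 ≤ i ≤ n; {v_i, v_n} for 1 ≤ i ≤ n−1; {v_i, v_j, v_n} where v_i v_j is an edge of the outer cycle; or {v_i, v_j, v_k, v_n} where v_i v_j and v_j v_k are edges of the outer cycle. -/

import Mathlib

/-- The `S`-eccentricity of a vertex `v`. -/
noncomputable def sEcc {V : Type*} (G : SimpleGraph V) (S : Finset V) (v : V) : ℕ :=
  S.sup fun x => G.dist v x

/-- The `S`-center of `G`. -/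
noncomputable def sCenter {V : Type*} (G : SimpleGraph V) (S : Finset V) : Set V :=
  {v | ∀ w, sEcc G S v ≤ sEcc G S w}

/-- `A` is a center set of `G` if it is the `S`-center for some nonempty set `S`. -/
def IsCenterSet {V : Type*} (G : SimpleGraph V) (A : Set V) : Prop :=
  ∃ S : Finset V, S.Nonempty ∧ sCenter G S = A

/-- The wheel graph with outer cycle `C_m` on the vertices `some i`, `i : Fin m`, and
universal (hub) vertex `none`. -/
def wheelGraph (m : ℕ) : SimpleGraph (Option (Fin m)) where
  Adj a b :=
    match a, b with
    | none, none => False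
    | none, some _ => True
    | some _, none => True
    | some i, some j => (SimpleGraph.cycleGraph m).Adj i j
  symm := by
    constructor
    rintro (_ | a) (_ | b) h <;> simp_all
    exact h.symm
  loopless := by
    constructor
    rintro (_ | a) h <;> simp_all

open scoped Fin.NatCast Fin.IntCast Fin.CommRing

lemma fin_cast_ne_zero {m : ℕ} [NeZero m] (c : ℕ) (h0 : 0 < c) (hc : c < m) :
    ((c:ℕ) : Fin m) ≠ 0 := by
  intro h
  rw [Fin.natCast_eq_zero] at h
  exact absurd (Nat.le_of_dvd h0 h) (by omega)

section FinStuff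
variable {m : ℕ} [NeZero m]

/-- `a` is in the closed cycle-neighborhood of `j`. -/
def win (j a : Fin m) : Prop := a = j - 1 ∨ a = j ∨ a = j + 1

lemma win_iff_d {j a : Fin m} : win j a ↔ (a - j = -1 ∨ a - j = 0 ∨ a - j = 1) := by
  unfold win
  constructor
  · rintro (rfl | rfl | rfl)
    · left; ring
    · right; left; ring
    · right; right; ring
  · rintro (h | h | h)
    · left; linear_combination h
    · right; left; linear_combination h
    · right; right; linear_combination h

lemma fin_one_lt_val (hm : 5 ≤ m) : (1 : Fin m).val = 1 := by
  obtain ⟨k, rfl⟩ : ∃ k, m = k + 1 := ⟨m - 1, by omega⟩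
  simp [Fin.val_one', Nat.mod_eq_of_lt (by omega : 1 < k + 1)]

lemma cycle_adj_iff (hm : 5 ≤ m) {a b : Fin m} :
    (SimpleGraph.cycleGraph m).Adj a b ↔ a = b + 1 ∨ b = a + 1 := by
  rw [SimpleGraph.cycleGraph_adj']
  have h1 : ∀ x y : Fin m, (x - y).val = 1 ↔ x = y + 1 := by
    intro x y
    rw [show (1:ℕ) = (1:Fin m).val from (fin_one_lt_val hm).symm, ← Fin.ext_iff,
      sub_eq_iff_eq_add, add_comm]
  rw [h1, h1]

lemma win_symm {j a : Fin m} (h : win j a) : win a j := by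
  rw [win_iff_d] at h ⊢
  rcases h with h | h | h
  · right; right; linear_combination -h
  · right; left; linear_combination -h
  · left; linear_combination -h

lemma win_self (j : Fin m) : win j j := Or.inr (Or.inl rfl)
lemma win_sub_one (j : Fin m) : win j (j - 1) := Or.inl rfl
lemma win_add_one (j : Fin m) : win j (j + 1) := Or.inr (Or.inr rfl)

lemma fin_clash (c : ℕ) (h0 : 0 < c) (hc : c < m)
    (h : ((c:ℕ) : Fin m) = 0) : False := fin_cast_ne_zero c h0 hc h

lemma win_pair_iff (hm : 5 ≤ m) {i a : Fin m} :
    (win (i - 1) a ∧ win (i + 1) a) ↔ a = i := by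
  constructor
  · rintro ⟨h1, h2⟩
    rw [win_iff_d] at h1 h2
    have e1 : a - (i - 1) = (a - i) + 1 := by ring
    have e2 : a - (i + 1) = (a - i) - 1 := by ring
    rw [e1] at h1; rw [e2] at h2
    have hd1 : a - i = -1 - 1 ∨ a - i = -1 ∨ a - i = 0 := by
      rcases h1 with h | h | h
      · exact Or.inl (by linear_combination h)
      · exact Or.inr (Or.inl (by linear_combination h))
      · exact Or.inr (Or.inr (by linear_combination h))
    have hd2 : a - i = 0 ∨ a - i = 1 ∨ a - i = 1 + 1 := by
      rcases h2 with h | h | h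
      · exact Or.inl (by linear_combination h)
      · exact Or.inr (Or.inl (by linear_combination h))
      · exact Or.inr (Or.inr (by linear_combination h))
    rcases hd1 with hA | hA | hA <;> rcases hd2 with hB | hB | hB
    · exact absurd (by push_cast; linear_combination hA - hB : ((2:ℕ) : Fin m) = 0)
        (fin_cast_ne_zero 2 (by omega) (by omega))
    · exact absurd (by push_cast; linear_combination hA - hB : ((3:ℕ) : Fin m) = 0)
        (fin_cast_ne_zero 3 (by omega) (by omega))
    · exact absurd (by push_cast; linear_combination hA - hB : ((4:ℕ) : Fin m) = 0)
        (fin_cast_ne_zero 4 (by omega) (by omega))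
    · exact absurd (by push_cast; linear_combination hA - hB : ((1:ℕ) : Fin m) = 0)
        (fin_cast_ne_zero 1 (by omega) (by omega))
    · exact absurd (by push_cast; linear_combination hA - hB : ((2:ℕ) : Fin m) = 0)
        (fin_cast_ne_zero 2 (by omega) (by omega))
    · exact absurd (by push_cast; linear_combination hA - hB : ((3:ℕ) : Fin m) = 0)
        (fin_cast_ne_zero 3 (by omega) (by omega))
    · linear_combination hA
    · exact absurd (by push_cast; linear_combination hA - hB : ((1:ℕ) : Fin m) = 0)
        (fin_cast_ne_zero 1 (by omega) (by omega))
    · exact absurd (by push_cast; linear_combination hA - hB : ((2:ℕ) : Fin m) = 0)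
        (fin_cast_ne_zero 2 (by omega) (by omega))
  · rintro rfl
    refine ⟨?_, ?_⟩
    · have := win_add_one (m := m) (a - 1); rwa [sub_add_cancel] at this
    · have := win_sub_one (m := m) (a + 1); rwa [add_sub_cancel_right] at this

lemma win_edge_iff (hm : 5 ≤ m) {i a : Fin m} :
    (win i a ∧ win (i + 1) a) ↔ (a = i ∨ a = i + 1) := by
  constructor
  · rintro ⟨h1, h2⟩
    rw [win_iff_d] at h1 h2
    have e2 : a - (i + 1) = (a - i) - 1 := by ring
    rw [e2] at h2
    have hd2 : a - i = 0 ∨ a - i = 1 ∨ a - i = 1 + 1 := by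
      rcases h2 with h | h | h
      · exact Or.inl (by linear_combination h)
      · exact Or.inr (Or.inl (by linear_combination h))
      · exact Or.inr (Or.inr (by linear_combination h))
    rcases h1 with hA | hA | hA <;> rcases hd2 with hB | hB | hB
    · exact absurd (by push_cast; linear_combination hA - hB : ((1:ℕ) : Fin m) = 0)
        (fin_cast_ne_zero 1 (by omega) (by omega))
    · exact absurd (by push_cast; linear_combination hA - hB : ((2:ℕ) : Fin m) = 0)
        (fin_cast_ne_zero 2 (by omega) (by omega))
    · exact absurd (by push_cast; linear_combination hA - hB : ((3:ℕ) : Fin m) = 0)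
        (fin_cast_ne_zero 3 (by omega) (by omega))
    · exact Or.inl (by linear_combination hA)
    · exact absurd (by push_cast; linear_combination hA - hB : ((1:ℕ) : Fin m) = 0)
        (fin_cast_ne_zero 1 (by omega) (by omega))
    · exact absurd (by push_cast; linear_combination hA - hB : ((2:ℕ) : Fin m) = 0)
        (fin_cast_ne_zero 2 (by omega) (by omega))
    · exact absurd (by push_cast; linear_combination hB - hA : ((1:ℕ) : Fin m) = 0)
        (fin_cast_ne_zero 1 (by omega) (by omega))
    · exact Or.inr (by linear_combination hA)
    · exact absurd (by push_cast; linear_combination hA - hB : ((1:ℕ) : Fin m) = 0)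
        (fin_cast_ne_zero 1 (by omega) (by omega))
  · rintro (rfl | rfl)
    · refine ⟨win_self _, ?_⟩
      have := win_sub_one (m := m) (a + 1); rwa [add_sub_cancel_right] at this
    · exact ⟨win_add_one _, win_self _⟩

lemma fin_ne_add_one (hm : 5 ≤ m) (i : Fin m) : i ≠ i + 1 := by
  intro h
  exact absurd (by push_cast; linear_combination -h : ((1:ℕ) : Fin m) = 0)
    (fin_cast_ne_zero 1 (by omega) (by omega))

lemma fin_sub_one_ne (hm : 5 ≤ m) (i : Fin m) : i - 1 ≠ i := by
  intro h
  exact absurd (by push_cast; linear_combination -h : ((1:ℕ) : Fin m) = 0)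
    (fin_cast_ne_zero 1 (by omega) (by omega))

lemma fin_sub_one_ne_add_one (hm : 5 ≤ m) (i : Fin m) : i - 1 ≠ i + 1 := by
  intro h
  exact absurd (by push_cast; linear_combination -h : ((2:ℕ) : Fin m) = 0)
    (fin_cast_ne_zero 2 (by omega) (by omega))

lemma adj_sub_one (hm : 5 ≤ m) (j : Fin m) : (SimpleGraph.cycleGraph m).Adj (j - 1) j := by
  rw [cycle_adj_iff hm]
  exact Or.inr (sub_add_cancel j 1).symm

lemma adj_add_one (hm : 5 ≤ m) (j : Fin m) : (SimpleGraph.cycleGraph m).Adj j (j + 1) := by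
  rw [cycle_adj_iff hm]
  exact Or.inr rfl

lemma adj_adj_ne (hm : 5 ≤ m) {i j k : Fin m} (h1 : (SimpleGraph.cycleGraph m).Adj i j)
    (h2 : (SimpleGraph.cycleGraph m).Adj j k) (hik : i ≠ k) :
    (i = j - 1 ∧ k = j + 1) ∨ (i = j + 1 ∧ k = j - 1) := by
  rw [cycle_adj_iff hm] at h1 h2
  have h1' : i = j + 1 ∨ i = j - 1 := by
    rcases h1 with h | h
    · exact Or.inl h
    · exact Or.inr (by linear_combination -h)
  have h2' : k = j + 1 ∨ k = j - 1 := by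
    rcases h2 with h | h
    · exact Or.inr (by linear_combination -h)
    · exact Or.inl h
  rcases h1' with rfl | rfl <;> rcases h2' with h | h
  · exact absurd h.symm hik
  · exact Or.inr ⟨rfl, h⟩
  · exact Or.inl ⟨rfl, h⟩
  · exact absurd h.symm hik

end FinStuff

section WheelLemmas
variable {m : ℕ}

lemma wheel_adj_some_none (i : Fin m) : (wheelGraph m).Adj (some i) none := trivial

lemma wheel_reachable (v w : Option (Fin m)) : (wheelGraph m).Reachable v w := by
  have key : ∀ v : Option (Fin m), (wheelGraph m).Reachable v none := by
    rintro (_ | i)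
    · exact SimpleGraph.Reachable.refl none
    · exact (wheel_adj_some_none i).reachable
  exact (key v).trans (key w).symm

lemma wheel_dist_none_le_one (x : Option (Fin m)) : (wheelGraph m).dist none x ≤ 1 := by
  rcases x with _ | i
  · rw [SimpleGraph.dist_self]; omega
  · exact le_of_eq (SimpleGraph.dist_eq_one_iff_adj.mpr ((wheel_adj_some_none i).symm))

lemma wheel_one_le_dist {v w : Option (Fin m)} (h : v ≠ w) : 1 ≤ (wheelGraph m).dist v w :=
  (wheel_reachable v w).pos_dist_of_ne h

lemma wheel_dist_le_one_iff {v x : Option (Fin m)} :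
    (wheelGraph m).dist v x ≤ 1 ↔ v = x ∨ (wheelGraph m).Adj v x := by
  constructor
  · intro h
    rcases Nat.le_one_iff_eq_zero_or_eq_one.mp h with h0 | h1
    · exact Or.inl ((wheel_reachable v x).dist_eq_zero_iff.mp h0)
    · exact Or.inr (SimpleGraph.dist_eq_one_iff_adj.mp h1)
  · rintro (rfl | h)
    · rw [SimpleGraph.dist_self]; omega
    · exact le_of_eq (SimpleGraph.dist_eq_one_iff_adj.mpr h)

lemma sCenter_singleton_wheel (x : Option (Fin m)) :
    sCenter (wheelGraph m) {x} = {x} := by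
  ext v
  simp only [sCenter, sEcc, Finset.sup_singleton, Set.mem_setOf_eq, Set.mem_singleton_iff]
  constructor
  · intro h
    have hx := h x
    rw [SimpleGraph.dist_self] at hx
    exact (wheel_reachable v x).dist_eq_zero_iff.mp (Nat.le_zero.mp hx)
  · rintro rfl w
    rw [SimpleGraph.dist_self]
    exact Nat.zero_le _

lemma sCenter_of_two {S : Finset (Option (Fin m))}
    (h2 : ∃ x ∈ S, ∃ y ∈ S, x ≠ y) :
    sCenter (wheelGraph m) S = {none} ∪
      {v | ∃ i : Fin m, v = some i ∧
        ∀ j : Fin m, some j ∈ S → (i = j ∨ (SimpleGraph.cycleGraph m).Adj i j)} := by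
  obtain ⟨x, hx, y, hy, hxy⟩ := h2
  have hpos : ∀ v, 1 ≤ sEcc (wheelGraph m) S v := by
    intro v
    rcases ne_or_eq x v with h | rfl
    · exact le_trans (wheel_one_le_dist h.symm) (Finset.le_sup hx)
    · exact le_trans (wheel_one_le_dist hxy) (Finset.le_sup hy)
  have hnone : sEcc (wheelGraph m) S none ≤ 1 :=
    Finset.sup_le fun x _ => wheel_dist_none_le_one x
  have hmem : ∀ v, v ∈ sCenter (wheelGraph m) S ↔ sEcc (wheelGraph m) S v ≤ 1 := by
    intro v
    constructor
    · intro h; exact le_trans (h none) hnone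
    · intro h w; exact le_trans h (hpos w)
  ext v
  rw [hmem]
  rcases v with _ | i
  · simp only [Set.mem_union, Set.mem_singleton_iff, true_or, iff_true]
    exact hnone
  · simp only [sEcc, Finset.sup_le_iff, Set.mem_union, Set.mem_singleton_iff,
      Set.mem_setOf_eq, reduceCtorEq, Option.some.injEq, false_or]
    constructor
    · intro h
      refine ⟨i, rfl, fun j hj => ?_⟩
      rcases wheel_dist_le_one_iff.mp (h (some j) hj) with h' | h'
      · exact Or.inl (Option.some_injective _ h')
      · exact Or.inr h'
    · rintro ⟨i', hi', hP⟩ x hx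
      cases hi'
      rcases x with _ | j
      · exact le_of_eq (SimpleGraph.dist_eq_one_iff_adj.mpr (wheel_adj_some_none i))
      · rcases hP j hx with rfl | h'
        · rw [SimpleGraph.dist_self]; omega
        · exact le_of_eq (SimpleGraph.dist_eq_one_iff_adj.mpr h')

end WheelLemmas

section Main
variable {m : ℕ}

/-- the predicate cutting out the non-hub part of the `S`-center -/
def centerPred (m : ℕ) (S : Finset (Option (Fin m))) (i : Fin m) : Prop :=
  ∀ j : Fin m, some j ∈ S → (i = j ∨ (SimpleGraph.cycleGraph m).Adj i j)

lemma sCenter_of_two' {S : Finset (Option (Fin m))}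
    (h2 : ∃ x ∈ S, ∃ y ∈ S, x ≠ y) :
    sCenter (wheelGraph m) S = {none} ∪
      {v | ∃ i : Fin m, v = some i ∧ centerPred m S i} :=
  sCenter_of_two h2

lemma mem_cu_some {S : Finset (Option (Fin m))} (i : Fin m) :
    (some i ∈ ({none} ∪ {v | ∃ i : Fin m, v = some i ∧ centerPred m S i} :
      Set (Option (Fin m)))) ↔ centerPred m S i := by
  simp

lemma mem_cu_none {S : Finset (Option (Fin m))} :
    (none ∈ ({none} ∪ {v | ∃ i : Fin m, v = some i ∧ centerPred m S i} :
      Set (Option (Fin m)))) := Or.inl rfl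

variable [NeZero m]

lemma or_adj_iff_win (hm : 5 ≤ m) {i j : Fin m} :
    (i = j ∨ (SimpleGraph.cycleGraph m).Adj i j) ↔ win j i := by
  rw [cycle_adj_iff hm]
  unfold win
  constructor
  · rintro (rfl | rfl | h)
    · exact Or.inr (Or.inl rfl)
    · exact Or.inr (Or.inr rfl)
    · exact Or.inl (by linear_combination -h)
  · rintro (rfl | rfl | rfl)
    · right; right; exact (sub_add_cancel j 1).symm
    · left; rfl
    · right; left; rfl

lemma center_edge (hm : 5 ≤ m) (i : Fin m) :
    sCenter (wheelGraph m) {some i, some (i + 1)} = {some i, some (i + 1), none} := by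
  rw [sCenter_of_two' ⟨some i, by simp, some (i + 1), by simp,
    by simpa using fin_ne_add_one hm i⟩]
  ext v
  rcases v with _ | a
  · simp
  · rw [mem_cu_some]
    have hiff : centerPred m {some i, some (i + 1)} a ↔ (win i a ∧ win (i + 1) a) := by
      constructor
      · intro h
        exact ⟨(or_adj_iff_win hm).mp (h i (by simp)),
          (or_adj_iff_win hm).mp (h (i + 1) (by simp))⟩
      · rintro ⟨h1, h2⟩ j hj
        simp only [Finset.mem_insert, Finset.mem_singleton, Option.some.injEq] at hj
        rcases hj with rfl | rfl
        · exact (or_adj_iff_win hm).mpr h1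
        · exact (or_adj_iff_win hm).mpr h2
    rw [hiff, win_edge_iff hm]
    simp

lemma center_hub (hm : 5 ≤ m) (j : Fin m) :
    sCenter (wheelGraph m) {some j, none} =
      {some (j - 1), some j, some (j + 1), none} := by
  rw [sCenter_of_two' ⟨some j, by simp, none, by simp, by simp⟩]
  ext v
  rcases v with _ | a
  · simp
  · rw [mem_cu_some]
    have hiff : centerPred m {some j, none} a ↔ win j a := by
      constructor
      · intro h
        exact (or_adj_iff_win hm).mp (h j (by simp))
      · intro h j' hj'
        simp only [Finset.mem_insert, Finset.mem_singleton, Option.some.injEq,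
          reduceCtorEq, or_false] at hj'
        subst hj'
        exact (or_adj_iff_win hm).mpr h
    rw [hiff]
    unfold win
    simp

lemma center_pair (hm : 5 ≤ m) (i : Fin m) :
    sCenter (wheelGraph m) {some (i - 1), some (i + 1)} = {some i, none} := by
  rw [sCenter_of_two' ⟨some (i - 1), by simp, some (i + 1), by simp,
    by simpa using fin_sub_one_ne_add_one hm i⟩]
  ext v
  rcases v with _ | a
  · simp
  · rw [mem_cu_some]
    have hiff : centerPred m {some (i - 1), some (i + 1)} a ↔
        (win (i - 1) a ∧ win (i + 1) a) := by
      constructor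
      · intro h
        exact ⟨(or_adj_iff_win hm).mp (h (i - 1) (by simp)),
          (or_adj_iff_win hm).mp (h (i + 1) (by simp))⟩
      · rintro ⟨h1, h2⟩ j hj
        simp only [Finset.mem_insert, Finset.mem_singleton, Option.some.injEq] at hj
        rcases hj with rfl | rfl
        · exact (or_adj_iff_win hm).mpr h1
        · exact (or_adj_iff_win hm).mpr h2
    rw [hiff, win_pair_iff hm]
    simp

end Main

/-- For the wheel `W_n`, `n ≥ 6`, with outer cycle `v_1, …, v_{n-1}` (here the vertices
`some i`) and hub `v_n` (here `none`), the center sets are exactly: the singletons; the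
pairs `{v_i, v_n}`; the sets `{v_i, v_j, v_n}` with `v_i v_j` an outer-cycle edge; and
the sets `{v_i, v_j, v_k, v_n}` with `v_i v_j`, `v_j v_k` outer-cycle edges (`v_i ≠ v_k`). -/
theorem centerSets_of_wheel (m : ℕ) (hm : 5 ≤ m) (A : Set (Option (Fin m))) :
    IsCenterSet (wheelGraph m) A ↔
      (∃ v : Option (Fin m), A = {v}) ∨
      (∃ i : Fin m, A = {some i, none}) ∨
      (∃ i j : Fin m, (SimpleGraph.cycleGraph m).Adj i j ∧ A = {some i, some j, none}) ∨
      (∃ i j k : Fin m, (SimpleGraph.cycleGraph m).Adj i j ∧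
        (SimpleGraph.cycleGraph m).Adj j k ∧ i ≠ k ∧
        A = {some i, some j, some k, none}) := by
  haveI : NeZero m := ⟨by omega⟩
  constructor
  · rintro ⟨S, hS, rfl⟩
    by_cases hcard : S.card = 1
    · obtain ⟨x, rfl⟩ := Finset.card_eq_one.mp hcard
      exact Or.inl ⟨x, sCenter_singleton_wheel x⟩
    · have h1 : 1 < S.card := by have := hS.card_pos; omega
      obtain ⟨x, hx, y, hy, hxy⟩ := Finset.one_lt_card.mp h1
      rw [sCenter_of_two' ⟨x, hx, y, hy, hxy⟩]
      obtain ⟨j0, hj0⟩ : ∃ j : Fin m, some j ∈ S := by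
        rcases x with _ | i
        · rcases y with _ | i
          · exact absurd rfl hxy
          · exact ⟨i, hy⟩
        · exact ⟨i, hx⟩
      have hwin : ∀ i, centerPred m S i → win j0 i := fun i h =>
        (or_adj_iff_win hm).mp (h j0 hj0)
      have hexcl : centerPred m S (j0 - 1) → centerPred m S (j0 + 1) →
          centerPred m S j0 := by
        intro hA hB j hj
        have w1 : win j (j0 - 1) := (or_adj_iff_win hm).mp (hA j hj)
        have w2 : win j (j0 + 1) := (or_adj_iff_win hm).mp (hB j hj)
        have hj0j : j = j0 := (win_pair_iff hm).mp ⟨win_symm w1, win_symm w2⟩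
        exact Or.inl hj0j.symm
      by_cases pA : centerPred m S (j0 - 1) <;>
        by_cases pB : centerPred m S j0 <;>
        by_cases pC : centerPred m S (j0 + 1)
      -- TTT
      · refine Or.inr (Or.inr (Or.inr ⟨j0 - 1, j0, j0 + 1, adj_sub_one hm j0,
          adj_add_one hm j0, fin_sub_one_ne_add_one hm j0, ?_⟩))
        ext v
        rcases v with _ | i
        · simp [mem_cu_none]
        · rw [mem_cu_some]
          simp only [Set.mem_insert_iff, Set.mem_singleton_iff, Option.some.injEq,
            reduceCtorEq, or_false]
          constructor
          · exact fun h => hwin i h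
          · rintro (rfl | rfl | rfl)
            exacts [pA, pB, pC]
      -- TTF
      · refine Or.inr (Or.inr (Or.inl ⟨j0 - 1, j0, adj_sub_one hm j0, ?_⟩))
        ext v
        rcases v with _ | i
        · simp [mem_cu_none]
        · rw [mem_cu_some]
          simp only [Set.mem_insert_iff, Set.mem_singleton_iff, Option.some.injEq,
            reduceCtorEq, or_false]
          constructor
          · intro h
            rcases hwin i h with rfl | rfl | rfl
            · exact Or.inl rfl
            · exact Or.inr rfl
            · exact absurd h pC
          · rintro (rfl | rfl)
            exacts [pA, pB]
      -- TFT
      · exact absurd (hexcl pA pC) pB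
      -- TFF
      · refine Or.inr (Or.inl ⟨j0 - 1, ?_⟩)
        ext v
        rcases v with _ | i
        · simp [mem_cu_none]
        · rw [mem_cu_some]
          simp only [Set.mem_insert_iff, Set.mem_singleton_iff, Option.some.injEq,
            reduceCtorEq, or_false]
          constructor
          · intro h
            rcases hwin i h with rfl | rfl | rfl
            · rfl
            · exact absurd h pB
            · exact absurd h pC
          · rintro rfl
            exact pA
      -- FTT
      · refine Or.inr (Or.inr (Or.inl ⟨j0, j0 + 1, adj_add_one hm j0, ?_⟩))
        ext v
        rcases v with _ | i
        · simp [mem_cu_none]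
        · rw [mem_cu_some]
          simp only [Set.mem_insert_iff, Set.mem_singleton_iff, Option.some.injEq,
            reduceCtorEq, or_false]
          constructor
          · intro h
            rcases hwin i h with rfl | rfl | rfl
            · exact absurd h pA
            · exact Or.inl rfl
            · exact Or.inr rfl
          · rintro (rfl | rfl)
            exacts [pB, pC]
      -- FTF
      · refine Or.inr (Or.inl ⟨j0, ?_⟩)
        ext v
        rcases v with _ | i
        · simp [mem_cu_none]
        · rw [mem_cu_some]
          simp only [Set.mem_insert_iff, Set.mem_singleton_iff, Option.some.injEq,
            reduceCtorEq, or_false]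
          constructor
          · intro h
            rcases hwin i h with rfl | rfl | rfl
            · exact absurd h pA
            · rfl
            · exact absurd h pC
          · rintro rfl
            exact pB
      -- FFT
      · refine Or.inr (Or.inl ⟨j0 + 1, ?_⟩)
        ext v
        rcases v with _ | i
        · simp [mem_cu_none]
        · rw [mem_cu_some]
          simp only [Set.mem_insert_iff, Set.mem_singleton_iff, Option.some.injEq,
            reduceCtorEq, or_false]
          constructor
          · intro h
            rcases hwin i h with rfl | rfl | rfl
            · exact absurd h pA
            · exact absurd h pB
            · rfl
          · rintro rfl
            exact pC
      -- FFF
      · refine Or.inl ⟨none, ?_⟩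
        ext v
        rcases v with _ | i
        · simp [mem_cu_none]
        · rw [mem_cu_some]
          simp only [Set.mem_singleton_iff, reduceCtorEq, iff_false]
          intro h
          rcases hwin i h with rfl | rfl | rfl
          · exact pA h
          · exact pB h
          · exact pC h
  · rintro (⟨v, rfl⟩ | ⟨i, rfl⟩ | ⟨i, j, hadj, rfl⟩ | ⟨i, j, k, h1, h2, hik, rfl⟩)
    · exact ⟨{v}, Finset.singleton_nonempty v, sCenter_singleton_wheel v⟩
    · exact ⟨{some (i - 1), some (i + 1)}, by simp, center_pair hm i⟩
    · rcases (cycle_adj_iff hm).mp hadj with h | h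
      · subst h
        exact ⟨{some j, some (j + 1)}, by simp,
          (center_edge hm j).trans (Set.insert_comm _ _ _)⟩
      · subst h
        exact ⟨{some i, some (i + 1)}, by simp, center_edge hm i⟩
    · rcases adj_adj_ne hm h1 h2 hik with ⟨hi, hk⟩ | ⟨hi, hk⟩ <;> subst hi <;> subst hk
      · exact ⟨{some j, none}, by simp, center_hub hm j⟩
      · refine ⟨{some j, none}, by simp, (center_hub hm j).trans ?_⟩
        ext v
        simp only [Set.mem_insert_iff, Set.mem_singleton_iff]
        tauto
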